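/- Let R be a Noetherian local ring of Krull dimension d > 0 and M a finitely generated R-module of finite length. Then the class [M] is zero in the rationalized Grothendieck group G(R)⊗Q of finitely generated R-modules. -/

import Mathlib

open CategoryTheory IsLocalRing

noncomputable section

/-- The `i`-th Tor module of two modules over a commutative ring `R`. -/
def TorMod (R : Type) [CommRing R] (i : ℕ)
    (M N : Type) [AddCommGroup M] [Module R M] [AddCommGroup N] [Module R N] :
    ModuleCat R :=
  ((Tor (ModuleCat.{0} R) i).obj (ModuleCat.of R M)).obj (ModuleCat.of R N)

/-- The length of a module, as the Krull dimension of its lattice of submodules. -/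
def modLength (R : Type) [CommRing R]
    (M : Type) [AddCommGroup M] [Module R M] : WithBot ℕ∞ :=
  Order.krullDim (Submodule R M)

/-- The dimension of a module: the Krull dimension of its support. -/
def moduleDim (R : Type) [CommRing R]
    (M : Type) [AddCommGroup M] [Module R M] : WithBot ℕ∞ :=
  Order.krullDim (Module.support R M)

/-- A Noetherian local ring is regular if its maximal ideal is generated by
`dim R` elements. -/
def IsRegularLocal (R : Type) [CommRing R] [IsLocalRing R] : Prop :=
  IsNoetherianRing R ∧ ∃ s : Finset R,
    Ideal.span (s : Set R) = maximalIdeal R ∧ (s.card : WithBot ℕ∞) = ringKrullDim R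

/-- An admissible regular local ring: a power series ring over a field or over a
(complete) discrete valuation ring. -/
def IsAdmissibleRegular (T : Type) [CommRing T] : Prop :=
  (∃ (k : Type) (_ : Field k) (n : ℕ), Nonempty (T ≃+* MvPowerSeries (Fin n) k)) ∨
  (∃ (V : Type) (_ : CommRing V) (_ : IsDomain V) (_ : IsDiscreteValuationRing V) (n : ℕ),
    Nonempty (T ≃+* MvPowerSeries (Fin n) V))

/-- `R` is a hypersurface: its completion is `T/(f)` for a regular local ring `T`
and a nonzerodivisor `f` in the maximal ideal of `T`.  When `adm` is `true` we
furthermore require `T` to be admissible. -/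
def IsHypersurface (R : Type) [CommRing R] [IsLocalRing R] (adm : Bool := false) : Prop :=
  ∃ (T : Type) (_ : CommRing T) (_ : IsLocalRing T) (f : T),
    IsRegularLocal T ∧ (adm → IsAdmissibleRegular T) ∧
    f ∈ maximalIdeal T ∧ f ∈ nonZeroDivisors T ∧
    Nonempty ((AdicCompletion (maximalIdeal R) R) ≃+* (T ⧸ Ideal.span {f}))

/-- `M` has finite projective dimension: it admits a projective resolution vanishing
in all sufficiently high degrees. -/
def FinitePD (R : Type) [CommRing R]
    (M : Type) [AddCommGroup M] [Module R M] : Prop :=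
  ∃ (n : ℕ) (P : ProjectiveResolution (ModuleCat.of R M)),
    ∀ m : ℕ, n < m → Subsingleton (P.complex.X m)

/-- The singular locus of `R`. -/
def singLocus (R : Type) [CommRing R] : Set (PrimeSpectrum R) :=
  { p | ¬ IsRegularLocal (Localization.AtPrime p.asIdeal) }

/-- The infinite projective dimension locus of a module `M`. -/
def IPD (R : Type) [CommRing R] (M : Type) [AddCommGroup M] [Module R M] :
    Set (PrimeSpectrum R) :=
  { p | ¬ FinitePD (Localization.AtPrime p.asIdeal)
      (LocalizedModule p.asIdeal.primeCompl M) }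

/-- `R` has (at most) an isolated singularity: every localization at a
nonmaximal prime is regular. -/
def IsolatedSingularity (R : Type) [CommRing R] [IsLocalRing R] : Prop :=
  ∀ p : PrimeSpectrum R, p.asIdeal ≠ maximalIdeal R →
    IsRegularLocal (Localization.AtPrime p.asIdeal)

/-- The pair `(M, N)` is Tor-rigid. -/
def TorRigid (R : Type) [CommRing R]
    (M N : Type) [AddCommGroup M] [Module R M] [AddCommGroup N] [Module R N] : Prop :=
  ∀ i : ℕ, Subsingleton (TorMod R i M N) →
    ∀ j : ℕ, i ≤ j → Subsingleton (TorMod R j M N)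

/-- Hochster's theta invariant of the pair `(M, N)` vanishes: for every index `e`
beyond the periodicity threshold, the lengths of `Tor_{2e+2}` and `Tor_{2e+1}` agree. -/
def ThetaZero (R : Type) [CommRing R]
    (M N : Type) [AddCommGroup M] [Module R M] [AddCommGroup N] [Module R N] : Prop :=
  ∀ e : ℕ, ringKrullDim R + 2 ≤ ((2 * e : ℕ) : WithBot ℕ∞) →
    modLength R (TorMod R (2 * e + 2) M N) = modLength R (TorMod R (2 * e + 1) M N)

/-- Hochster's theta invariant is defined for `(M,N)`: all sufficiently high Tor
modules have finite length. -/
def ThetaDefined (R : Type) [CommRing R]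
    (M N : Type) [AddCommGroup M] [Module R M] [AddCommGroup N] [Module R N] : Prop :=
  ∃ k : ℕ, ∀ j : ℕ, k ≤ j → IsFiniteLength R (TorMod R j M N)

/-- `M` has constant rank `r`: free of rank `r` at every minimal prime. -/
def ConstantRank (R : Type) [CommRing R]
    (M : Type) [AddCommGroup M] [Module R M] (r : ℕ) : Prop :=
  ∀ p : Ideal R, ∀ h : p ∈ minimalPrimes R,
    haveI : p.IsPrime := h.1.1
    Nonempty ((LocalizedModule p.primeCompl M) ≃ₗ[Localization p.primeCompl]
      (Fin r → Localization p.primeCompl))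

/-- `depth M ≥ n`: there is an `M`-regular sequence of length `n` inside the
maximal ideal. -/
def depthGE (R : Type) [CommRing R] [IsLocalRing R]
    (M : Type) [AddCommGroup M] [Module R M] (n : ℕ) : Prop :=
  ∃ rs : List R, rs.length = n ∧ (∀ r ∈ rs, r ∈ maximalIdeal R) ∧
    RingTheory.Sequence.IsRegular M rs

/-- `M` is a Cohen–Macaulay module: its depth equals its dimension. -/
def IsCohenMacaulayMod (R : Type) [CommRing R] [IsLocalRing R]
    (M : Type) [AddCommGroup M] [Module R M] : Prop :=
  ∃ n : ℕ, moduleDim R M = (n : WithBot ℕ∞) ∧ depthGE R M n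

/-- Generating relations for the Grothendieck group of finitely generated modules:
one relation for each short exact sequence of finitely generated modules. -/
def GRelGens (R : Type) [CommRing R] : Set (FreeAbelianGroup (ModuleCat.{0} R)) :=
  { x | ∃ (A B C : ModuleCat.{0} R) (f : A →ₗ[R] B) (g : B →ₗ[R] C),
      Module.Finite R A ∧ Module.Finite R B ∧ Module.Finite R C ∧
      Function.Injective f ∧ Function.Surjective g ∧ Function.Exact f g ∧
      x = FreeAbelianGroup.of B - (FreeAbelianGroup.of A + FreeAbelianGroup.of C) }

/-- The Grothendieck group `G(R)` of finitely generated `R`-modules. -/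
def GGroup (R : Type) [CommRing R] :=
  FreeAbelianGroup (ModuleCat.{0} R) ⧸ AddSubgroup.closure (GRelGens R)

instance (R : Type) [CommRing R] : AddCommGroup (GGroup R) :=
  QuotientAddGroup.Quotient.addCommGroup _

/-- The class of a finitely generated module in `G(R)`. -/
def gclass (R : Type) [CommRing R] (M : Type) [AddCommGroup M] [Module R M] :
    GGroup R :=
  QuotientAddGroup.mk (FreeAbelianGroup.of (ModuleCat.of R M))

end


section Aux

variable (R : Type) [CommRing R]

lemma gclass_eq_add {A B C : Type} [AddCommGroup A] [Module R A] [AddCommGroup B] [Module R B]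
    [AddCommGroup C] [Module R C] [Module.Finite R A] [Module.Finite R B] [Module.Finite R C]
    (f : A →ₗ[R] B) (g : B →ₗ[R] C) (hf : Function.Injective f) (hg : Function.Surjective g)
    (hfg : Function.Exact f g) :
    gclass R B = gclass R A + gclass R C := by
  have hx : (FreeAbelianGroup.of (ModuleCat.of R B)
      - (FreeAbelianGroup.of (ModuleCat.of R A) + FreeAbelianGroup.of (ModuleCat.of R C)))
      ∈ AddSubgroup.closure (GRelGens R) :=
    AddSubgroup.subset_closure ⟨ModuleCat.of R A, ModuleCat.of R B, ModuleCat.of R C,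
      f, g, ‹Module.Finite R A›, ‹Module.Finite R B›, ‹Module.Finite R C›, hf, hg, hfg, rfl⟩
  have h0 := (QuotientAddGroup.eq_zero_iff _).mpr hx
  rw [QuotientAddGroup.mk_sub, QuotientAddGroup.mk_add, sub_eq_zero] at h0
  exact h0

lemma gclass_zero {A : Type} [AddCommGroup A] [Module R A] [Subsingleton A]
    [Module.Finite R A] : gclass R A = 0 := by
  have h := gclass_eq_add R (LinearMap.id : A →ₗ[R] A) (0 : A →ₗ[R] A)
    (fun a b hab => hab) (fun a => ⟨0, Subsingleton.elim _ _⟩)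
    (LinearMap.exact_iff.mpr (by
      rw [LinearMap.ker_zero, LinearMap.range_id]))
  exact left_eq_add.mp h

lemma gclass_congr {A B : Type} [AddCommGroup A] [Module R A] [AddCommGroup B] [Module R B]
    [Module.Finite R A] [Module.Finite R B] (e : A ≃ₗ[R] B) :
    gclass R A = gclass R B := by
  haveI : Module.Finite R PUnit := Module.Finite.of_finite (R := R)
  have h := gclass_eq_add R e.toLinearMap (0 : B →ₗ[R] PUnit)
    e.injective (fun a => ⟨0, Subsingleton.elim _ _⟩)
    (LinearMap.exact_iff.mpr (by
      rw [LinearMap.ker_zero]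
      exact (LinearMap.range_eq_top.mpr e.surjective).symm))
  rw [gclass_zero R (A := PUnit), add_zero] at h
  exact h.symm

lemma gclass_eq_smul [IsLocalRing R] [IsNoetherianRing R] {M : Type} [AddCommGroup M]
    [Module R M] (hM : IsFiniteLength R M) :
    ∃ m : ℕ, gclass R M = m • gclass R (R ⧸ maximalIdeal R) ∧ (Nontrivial M → 0 < m) := by
  induction hM with
  | of_subsingleton =>
    rename_i M _ _ _
    haveI : Module.Finite R M := Module.Finite.of_finite (R := R)
    exact ⟨0, by simpa using gclass_zero R (A := M),
      fun h => absurd h (not_nontrivial_iff_subsingleton.mpr inferInstance)⟩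
  | of_simple_quotient hN ih =>
    rename_i M _ _ N _
    obtain ⟨m, hm, hmpos⟩ := ih
    have hMfl : IsFiniteLength R M := .of_simple_quotient hN
    haveI : IsNoetherian R M := (isFiniteLength_iff_isNoetherian_isArtinian.mp hMfl).1
    haveI : Module.Finite R M := inferInstance
    haveI : Module.Finite R N := inferInstance
    haveI : Module.Finite R (M ⧸ N) := inferInstance
    have hrel := gclass_eq_add R N.subtype N.mkQ (Submodule.injective_subtype N)
      (Submodule.mkQ_surjective N)
      (LinearMap.exact_iff.mpr (by rw [Submodule.ker_mkQ, Submodule.range_subtype]))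
    obtain ⟨I, hImax, ⟨e⟩⟩ := isSimpleModule_iff_quot_maximal.mp
      (inferInstance : IsSimpleModule R (M ⧸ N))
    have hIm : I = maximalIdeal R := IsLocalRing.eq_maximalIdeal hImax
    subst hIm
    have hq : gclass R (M ⧸ N) = gclass R (R ⧸ maximalIdeal R) := gclass_congr R e
    refine ⟨m + 1, ?_, fun _ => Nat.succ_pos m⟩
    rw [hrel, hm, hq, succ_nsmul]

lemma isArtinian_of_torsion [IsLocalRing R] {C : Type} [AddCommGroup C] [Module R C]
    [IsNoetherian R C] (h : ∀ r ∈ maximalIdeal R, ∀ c : C, r • c = 0) : IsArtinian R C := by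
  have hT : Module.IsTorsionBySet R C (maximalIdeal R : Set R) := fun x a => h a a.2 x
  letI : Module (R ⧸ maximalIdeal R) C := hT.module
  haveI : IsScalarTower R (R ⧸ maximalIdeal R) C := hT.isScalarTower
  haveI : IsNoetherian (R ⧸ maximalIdeal R) C := isNoetherian_of_tower R ‹IsNoetherian R C›
  haveI : Module.Finite (R ⧸ maximalIdeal R) C := inferInstance
  haveI : IsArtinianRing (R ⧸ maximalIdeal R) := by
    letI := Ideal.Quotient.field (maximalIdeal R)
    exact inferInstance
  haveI : IsArtinian (R ⧸ maximalIdeal R) C := isArtinian_of_fg_of_artinian'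
  let F : Submodule R C → Submodule (R ⧸ maximalIdeal R) C := fun N =>
    { carrier := N
      add_mem' := fun ha hb => N.add_mem ha hb
      zero_mem' := N.zero_mem
      smul_mem' := by
        intro c x hx
        obtain ⟨r, rfl⟩ := Ideal.Quotient.mk_surjective c
        have hsm : (Ideal.Quotient.mk (maximalIdeal R) r) • x = r • x := hT.mk_smul r x
        rw [hsm]
        exact N.smul_mem r hx }
  rw [isArtinian_iff]
  have hwf : WellFounded ((· < ·) : Submodule (R ⧸ maximalIdeal R) C →
      Submodule (R ⧸ maximalIdeal R) C → Prop) :=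
    (isArtinian_iff _ _).mp ‹IsArtinian (R ⧸ maximalIdeal R) C›
  refine Subrelation.wf ?_ (InvImage.wf F hwf)
  intro N₁ N₂ hlt
  show F N₁ < F N₂
  rw [SetLike.lt_iff_le_and_exists] at hlt ⊢
  obtain ⟨hle, x, hx2, hx1⟩ := hlt
  exact ⟨fun y hy => hle hy, x, hx2, hx1⟩

lemma isArtinian_of_pow_ann [IsLocalRing R] [IsNoetherianRing R] (n : ℕ) :
    ∀ (C : Type) [AddCommGroup C] [Module R C], ∀ _ : IsNoetherian R C,
    (∀ r ∈ maximalIdeal R ^ n, ∀ c : C, r • c = 0) → IsArtinian R C := by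
  induction n with
  | zero =>
    intro C _ _ _ h
    haveI : Subsingleton C := ⟨fun a b => by
      have ha := h 1 (by simp [Ideal.one_eq_top]) a
      have hb := h 1 (by simp [Ideal.one_eq_top]) b
      rw [one_smul] at ha hb
      rw [ha, hb]⟩
    infer_instance
  | succ n ih =>
    intro C _ _ _ h
    set D : Submodule R C := maximalIdeal R • ⊤ with hDdef
    have key : ∀ r ∈ maximalIdeal R ^ n, ∀ c ∈ D, r • c = (0 : C) := by
      intro r hr c hc
      refine Submodule.smul_induction_on hc (fun a ha x _ => ?_) (fun x y hx hy => ?_)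
      · rw [smul_smul]
        refine h _ ?_ x
        rw [pow_succ]
        exact Ideal.mul_mem_mul hr ha
      · rw [smul_add, hx, hy, add_zero]
    have hD : IsArtinian R D := ih D inferInstance (fun r hr d => Subtype.ext (by
      rw [Submodule.coe_smul, ZeroMemClass.coe_zero]
      exact key r hr d d.2))
    have hQ : IsArtinian R (C ⧸ D) := isArtinian_of_torsion R (fun r hr c => by
      obtain ⟨y, rfl⟩ := Submodule.Quotient.mk_surjective D c
      rw [← Submodule.Quotient.mk_smul, Submodule.Quotient.mk_eq_zero]
      exact Submodule.smul_mem_smul hr trivial)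
    exact (isArtinian_iff_submodule_quotient D).mpr ⟨hD, hQ⟩

lemma residue_torsion [IsLocalRing R] [IsNoetherianRing R] (hdim : 0 < ringKrullDim R) :
    ∃ n : ℕ, 0 < n ∧ n • gclass R (R ⧸ maximalIdeal R) = 0 := by
  -- there is a prime strictly below the maximal ideal
  have hex : ∃ p : Ideal R, p.IsPrime ∧ p < maximalIdeal R := by
    by_contra hc
    push_neg at hc
    have hle : ringKrullDim R ≤ 0 := by
      have hdef : ringKrullDim R
          = ⨆ (P : LTSeries (PrimeSpectrum R)), (P.length : WithBot ℕ∞) := rfl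
      rw [hdef]
      refine iSup_le fun P => ?_
      have hlen : P.length = 0 := by
        by_contra h0
        have hstep := P.step ⟨0, Nat.pos_of_ne_zero h0⟩
        have hlt : (P ⟨0, Nat.lt_succ_of_lt (Nat.pos_of_ne_zero h0)⟩).asIdeal
            < (P ⟨1, Nat.succ_lt_succ (Nat.pos_of_ne_zero h0)⟩).asIdeal := hstep
        have hmle : (P ⟨1, Nat.succ_lt_succ (Nat.pos_of_ne_zero h0)⟩).asIdeal
            ≤ maximalIdeal R :=
          IsLocalRing.le_maximalIdeal
            (P ⟨1, Nat.succ_lt_succ (Nat.pos_of_ne_zero h0)⟩).isPrime.ne_top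
        exact hc _ (P _).isPrime (lt_of_lt_of_le hlt hmle)
      rw [hlen]
      exact le_rfl
    exact absurd (lt_of_lt_of_le hdim hle) (lt_irrefl 0)
  obtain ⟨p0, hp0⟩ := hex
  -- choose a prime maximal among those strictly below the maximal ideal
  obtain ⟨p, hpS, hmax⟩ := WellFounded.has_min
    (wellFoundedGT (R := R) (M := R)).wf
    {q : Ideal R | q.IsPrime ∧ q < maximalIdeal R} ⟨p0, hp0⟩
  obtain ⟨hp, hplt⟩ := hpS
  haveI := hp
  obtain ⟨x, hxm, hxp⟩ := SetLike.exists_of_lt hplt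
  -- multiplication by x on R/p
  set f : (R ⧸ p) →ₗ[R] (R ⧸ p) := LinearMap.lsmul R (R ⧸ p) x with hfdef
  have hmul : ∀ a : R ⧸ p, x • a = Ideal.Quotient.mk p x * a := fun a =>
    Quotient.inductionOn' a fun b => rfl
  have hx0 : Ideal.Quotient.mk p x ≠ 0 := fun h =>
    hxp (Ideal.Quotient.eq_zero_iff_mem.mp h)
  have hf : Function.Injective f := by
    intro a b hab
    have hab' : x • a = x • b := hab
    rw [hmul a, hmul b] at hab'
    exact mul_left_cancel₀ hx0 hab'
  set K : Submodule R (R ⧸ p) := LinearMap.range f with hK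
  -- the cokernel is nontrivial
  have hsub : K ≤ maximalIdeal R • (⊤ : Submodule R (R ⧸ p)) := by
    rintro y ⟨z, rfl⟩
    exact Submodule.smul_mem_smul hxm trivial
  have hKne : K ≠ ⊤ := by
    intro htop
    have h1 : (⊤ : Submodule R (R ⧸ p)) = ⊥ :=
      Submodule.eq_bot_of_le_smul_of_le_jacobson_bot (maximalIdeal R) ⊤
        Module.Finite.fg_top (htop ▸ hsub)
        (by rw [IsLocalRing.jacobson_eq_maximalIdeal (⊥ : Ideal R) bot_ne_top])
    have hall : ∀ y : R ⧸ p, y = 0 := fun y =>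
      (Submodule.mem_bot R).mp (h1 ▸ Submodule.mem_top)
    obtain ⟨u, v, huv⟩ := (inferInstance : Nontrivial (R ⧸ p))
    exact huv ((hall u).trans (hall v).symm)
  haveI : Nontrivial ((R ⧸ p) ⧸ K) :=
    Submodule.Quotient.nontrivial_iff.mpr hKne
  -- the cokernel has finite length
  set J : Ideal R := p ⊔ Ideal.span {x} with hJ
  have hxJ : x ∈ J := Ideal.mem_sup_right (Ideal.subset_span rfl)
  have hkey : ∀ q : Ideal R, q.IsPrime → J ≤ q → q = maximalIdeal R := by
    intro q hq hJq
    have hqm : q ≤ maximalIdeal R := IsLocalRing.le_maximalIdeal hq.ne_top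
    rcases lt_or_eq_of_le hqm with hlt | heq
    · exfalso
      refine hmax q ⟨hq, hlt⟩ ?_
      refine lt_of_le_of_ne (le_trans le_sup_left hJq) ?_
      intro he
      exact hxp (he ▸ hJq hxJ)
    · exact heq
  have hradical : maximalIdeal R ≤ J.radical := by
    rw [Ideal.radical_eq_sInf]
    refine le_sInf fun q hq => ?_
    rw [hkey q hq.2 hq.1]
  obtain ⟨n, hn⟩ := Ideal.exists_radical_pow_le_of_fg J (IsNoetherian.noetherian _)
  have hpow : maximalIdeal R ^ n ≤ J := le_trans (Ideal.pow_right_mono hradical n) hn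
  have hann : ∀ r ∈ J, ∀ c : (R ⧸ p) ⧸ K, r • c = 0 := by
    intro r hr c
    obtain ⟨y, rfl⟩ := Submodule.Quotient.mk_surjective K c
    obtain ⟨a, ha, b, hb, rfl⟩ := Submodule.mem_sup.mp hr
    rw [← Submodule.Quotient.mk_smul, Submodule.Quotient.mk_eq_zero]
    have h1 : a • y = 0 := by
      obtain ⟨z, rfl⟩ := Submodule.Quotient.mk_surjective p y
      rw [← Submodule.Quotient.mk_smul, Submodule.Quotient.mk_eq_zero]
      show a • z ∈ p
      rw [smul_eq_mul]
      exact Ideal.mul_mem_right z p ha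
    have h2 : b • y ∈ K := by
      obtain ⟨t, rfl⟩ := Ideal.mem_span_singleton'.mp hb
      rw [mul_smul]
      exact K.smul_mem t ⟨y, rfl⟩
    rw [add_smul, h1, zero_add]
    exact h2
  haveI : IsArtinian R ((R ⧸ p) ⧸ K) :=
    isArtinian_of_pow_ann R n _ inferInstance (fun r hr c => hann r (hpow hr) c)
  have hfl : IsFiniteLength R ((R ⧸ p) ⧸ K) :=
    isFiniteLength_iff_isNoetherian_isArtinian.mpr ⟨inferInstance, inferInstance⟩
  -- the class of the cokernel vanishes
  have hrel := gclass_eq_add R f K.mkQ hf (Submodule.mkQ_surjective K)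
    (LinearMap.exact_iff.mpr (by rw [Submodule.ker_mkQ, hK]))
  have hC0 : gclass R ((R ⧸ p) ⧸ K) = 0 := left_eq_add.mp hrel
  obtain ⟨N, hNs, hNpos⟩ := gclass_eq_smul R hfl
  exact ⟨N, hNpos inferInstance, by rw [← hNs, hC0]⟩

end Aux

theorem stmt0 (R : Type) [CommRing R] [IsLocalRing R] [IsNoetherianRing R]
    (hdim : 0 < ringKrullDim R)
    (M : Type) [AddCommGroup M] [Module R M] [Module.Finite R M]
    (hM : IsFiniteLength R M) :
    ∃ n : ℕ, 0 < n ∧ n • gclass R M = 0 := by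
  obtain ⟨n, hn, hk⟩ := residue_torsion R hdim
  obtain ⟨l, hl, -⟩ := gclass_eq_smul R hM
  exact ⟨n, hn, by rw [hl, smul_comm, hk, smul_zero]⟩
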